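/- Let T_{h₁}, T_{h₂} be the parametrized operators T_h u(x) = u(x) + ∫_{-x}^x K(x,t;h) u(t) dt with kernels as in the previous context. Then for any u ∈ C[-a,a], T_{h₂} u = T_{h₁}[u(x) + ((h₂-h₁)/2) ∫_{-x}^x u(t) dt]. -/

import Mathlib

open MeasureTheory


noncomputable def clampR (c s : ℝ) : ℝ := max (-c) (min c s)

lemma clampR_cont (c : ℝ) : Continuous (clampR c) := by
  unfold clampR; fun_prop

lemma clampR_neg {c : ℝ} (hc : 0 ≤ c) (s : ℝ) : clampR c (-s) = -clampR c s := by
  simp only [clampR, max_def, min_def]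
  split_ifs <;> linarith

lemma abs_clampR_le {c : ℝ} (hc : 0 ≤ c) (s : ℝ) : |clampR c s| ≤ c := by
  rw [abs_le]
  exact ⟨le_max_left _ _, max_le (by linarith) (min_le_left _ _)⟩

lemma clampR_eq {c s : ℝ} (h : |s| ≤ c) : clampR c s = s := by
  rw [abs_le] at h
  rw [clampR, min_eq_right h.2, max_eq_right h.1]

lemma mem_uIcc_abs {t s : ℝ} (hs : s ∈ Set.uIcc (-t) t) : |s| ≤ |t| := by
  rcases Set.mem_uIcc.mp hs with ⟨h1, h2⟩ | ⟨h1, h2⟩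
  · exact abs_le_abs h2 (by linarith)
  · rw [← abs_neg t]; exact abs_le_abs h2 (by linarith)

lemma uIcc_neg_self {x : ℝ} : Set.uIcc (-x) x = Set.Icc (-|x|) |x| := by
  rcases le_total 0 x with h | h
  · rw [abs_of_nonneg h, Set.uIcc_of_le (by linarith)]
  · rw [abs_of_nonpos h, Set.uIcc_of_ge (by linarith), neg_neg]

/-- Relation between the parametrized transmutation operators:
`T_{h₂} u = T_{h₁}[u + ((h₂-h₁)/2)∫_{-x}^x u]`. -/
theorem stmt11 (a : ℝ) (ha : 0 < a) (K : ℝ → ℝ → ℂ)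
    (hK : ContinuousOn (fun p : ℝ × ℝ => K p.1 p.2)
      {p : ℝ × ℝ | |p.2| ≤ |p.1| ∧ |p.1| ≤ a})
    (Kh : ℂ → ℝ → ℝ → ℂ)
    (hKh : ∀ h x t, Kh h x t
      = h / 2 + K x t + h / 2 * ∫ s in t..x, (K x s - K x (-s)))
    (Th : ℂ → (ℝ → ℂ) → ℝ → ℂ)
    (hTh : ∀ h u x, Th h u x = u x + ∫ t in (-x)..x, Kh h x t * u t)
    (h₁ h₂ : ℂ) :
    ∀ u : ℝ → ℂ, ContinuousOn u (Set.Icc (-a) a) → ∀ x ∈ Set.Icc (-a) a,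
      Th h₂ u x
        = Th h₁ (fun y => u y + (h₂ - h₁) / 2 * ∫ t in (-y)..y, u t) x := by
  intro u hu x hx
  have hb : |x| ≤ a := abs_le.mpr ⟨hx.1, hx.2⟩
  set b : ℝ := |x| with hbdef
  have hb0 : 0 ≤ b := abs_nonneg x
  -- extended functions
  set v : ℝ → ℂ := fun s => u (clampR a s) with hvdef
  set Kc : ℝ → ℂ := fun s => K x (clampR b s) with hKcdef
  set g : ℝ → ℂ := fun s => Kc s - Kc (-s) with hgdef
  set F : ℝ → ℂ := fun t => ∫ s in t..x, g s with hFdef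
  set A : ℝ → ℂ := fun t => ∫ s in (0:ℝ)..t, v s with hAdef
  set G : ℝ → ℂ := fun t => A t - A (-t) with hGdef
  -- continuity
  have hcv : Continuous v :=
    hu.comp_continuous (clampR_cont a)
      (fun s => Set.mem_Icc.mpr (abs_le.mp (abs_clampR_le ha.le s)))
  have hcKc : Continuous Kc :=
    hK.comp_continuous (continuous_const.prodMk (clampR_cont b))
      (fun s => ⟨le_of_le_of_eq (abs_clampR_le hb0 s) hbdef,
        le_of_eq_of_le hbdef.symm hb⟩)
  have hcKcn : Continuous fun s : ℝ => Kc (-s) := hcKc.comp continuous_neg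
  have hcg : Continuous g := hcKc.sub hcKcn
  have hg_odd : ∀ s, g (-s) = -g s := by
    intro s; simp only [hgdef, neg_neg]; ring
  -- derivatives
  have hFderiv : ∀ t, HasDerivAt F (-(g t)) t := by
    intro t
    have h1 : HasDerivAt (fun r => ∫ s in x..r, g s) (g t) t :=
      intervalIntegral.integral_hasDerivAt_right (hcg.intervalIntegrable _ _)
        (hcg.aestronglyMeasurable.stronglyMeasurableAtFilter) hcg.continuousAt
    have h2 : F = fun r => -(∫ s in x..r, g s) := by
      funext r; exact intervalIntegral.integral_symm _ _
    rw [h2]; exact h1.neg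
  have hFcont : Continuous F := continuous_iff_continuousAt.mpr fun t => (hFderiv t).continuousAt
  have hAderiv : ∀ t, HasDerivAt A (v t) t := fun t =>
    intervalIntegral.integral_hasDerivAt_right (hcv.intervalIntegrable _ _)
      (hcv.aestronglyMeasurable.stronglyMeasurableAtFilter) hcv.continuousAt
  have hGderiv : ∀ t, HasDerivAt G (v t + v (-t)) t := by
    intro t
    have hA' : HasDerivAt (fun r => ∫ s in (0:ℝ)..r, v (-s)) (v (-t)) t :=
      intervalIntegral.integral_hasDerivAt_right
        ((hcv.comp continuous_neg).intervalIntegrable _ _)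
        ((hcv.comp continuous_neg).aestronglyMeasurable.stronglyMeasurableAtFilter)
        (hcv.comp continuous_neg).continuousAt
    have heq : (fun r : ℝ => A (-r)) = fun r => -∫ s in (0:ℝ)..r, v (-s) := by
      funext r
      simp only [hAdef]
      rw [intervalIntegral.integral_comp_neg, neg_zero,
        intervalIntegral.integral_symm 0 (-r), neg_neg]
    have h2 : HasDerivAt (fun r : ℝ => A (-r)) (-(v (-t))) t := by
      rw [heq]; exact hA'.neg
    have h3 := (hAderiv t).sub h2
    rw [hGdef]
    exact h3.congr_deriv (by ring)
  have hGcont : Continuous G := continuous_iff_continuousAt.mpr fun t => (hGderiv t).continuousAt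
  have hG_eq : ∀ t, G t = ∫ s in (-t)..t, v s := by
    intro t
    have hsplit := intervalIntegral.integral_add_adjacent_intervals (μ := volume)
      (a := -t) (b := 0) (c := t) (hcv.intervalIntegrable _ _) (hcv.intervalIntegrable _ _)
    simp only [hGdef, hAdef]
    rw [← hsplit, intervalIntegral.integral_symm (-t) 0]
    ring
  have hG_odd : ∀ t, G (-t) = -G t := by
    intro t; simp only [hGdef, neg_neg]; ring
  have hgint0 : ∀ t, (∫ s in (-t)..t, g s) = 0 := by
    intro t
    have h1 : (∫ s in (-t)..t, g (-s)) = ∫ s in (-t)..t, g s := by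
      rw [intervalIntegral.integral_comp_neg, neg_neg]
    have h2 : (∫ s in (-t)..t, g (-s)) = -∫ s in (-t)..t, g s := by
      simp only [hg_odd]; exact intervalIntegral.integral_neg
    linear_combination (h2 - h1) / 2
  have hF_even : ∀ t, F (-t) = F t := by
    intro t
    have hsplit := intervalIntegral.integral_add_adjacent_intervals (μ := volume)
      (a := -t) (b := t) (c := x) (hcg.intervalIntegrable _ _) (hcg.intervalIntegrable _ _)
    simp only [hFdef]
    rw [← hsplit, hgint0 t, zero_add]
  have hFx : F x = 0 := intervalIntegral.integral_same
  -- flip lemma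
  have hflip : ∀ W : ℝ → ℂ, (∫ t in (-x)..x, W t) = ∫ t in (-x)..x, W (-t) := by
    intro W
    rw [intervalIntegral.integral_comp_neg, neg_neg]
  -- Claim 1
  have hI1 : (∫ t in (-x)..x, (1 + F t) * G t) = 0 := by
    have h1 : (∫ t in (-x)..x, (1 + F t) * G t) = ∫ t in (-x)..x, -((1 + F t) * G t) :=
      (hflip _).trans (intervalIntegral.integral_congr fun t _ => by
        rw [hF_even, hG_odd]; ring)
    rw [intervalIntegral.integral_neg] at h1
    linear_combination h1 / 2
  -- Claim 2
  have hI2 : (∫ t in (-x)..x, g t * G t) = 2 * ∫ t in (-x)..x, Kc t * G t := by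
    have h1 : (∫ t in (-x)..x, Kc t * G t) = ∫ t in (-x)..x, -(Kc (-t) * G t) :=
      (hflip _).trans (intervalIntegral.integral_congr fun t _ => by
        rw [hG_odd]; ring)
    rw [intervalIntegral.integral_neg] at h1
    have hc1 : Continuous fun t : ℝ => Kc t * G t := hcKc.mul hGcont
    have hc2 : Continuous fun t : ℝ => Kc (-t) * G t := hcKcn.mul hGcont
    have h2 : (∫ t in (-x)..x, g t * G t)
        = (∫ t in (-x)..x, Kc t * G t) - ∫ t in (-x)..x, Kc (-t) * G t := by
      rw [← intervalIntegral.integral_sub (hc1.intervalIntegrable _ _)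
        (hc2.intervalIntegrable _ _)]
      exact intervalIntegral.integral_congr fun t _ => by simp only [hgdef]; ring
    rw [h2]
    linear_combination -h1
  -- Claim 3
  have hI3 : 2 * (∫ t in (-x)..x, F t * v t) = ∫ t in (-x)..x, F t * (v t + v (-t)) := by
    have h1 : (∫ t in (-x)..x, F t * v t) = ∫ t in (-x)..x, F t * v (-t) :=
      (hflip _).trans (intervalIntegral.integral_congr fun t _ => by rw [hF_even])
    have hc1 : Continuous fun t : ℝ => F t * v t := hFcont.mul hcv
    have hc2 : Continuous fun t : ℝ => F t * v (-t) := hFcont.mul (hcv.comp continuous_neg)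
    have h2 : (∫ t in (-x)..x, F t * (v t + v (-t)))
        = (∫ t in (-x)..x, F t * v t) + ∫ t in (-x)..x, F t * v (-t) := by
      rw [← intervalIntegral.integral_add (hc1.intervalIntegrable _ _)
        (hc2.intervalIntegrable _ _)]
      exact intervalIntegral.integral_congr fun t _ => by ring
    rw [h2, ← h1]; ring
  -- Claim 4 (integration by parts)
  have hI4 : (∫ t in (-x)..x, F t * (v t + v (-t))) = ∫ t in (-x)..x, g t * G t := by
    have key := intervalIntegral.integral_mul_deriv_eq_deriv_mul
      (u := F) (v := G) (u' := fun t => -(g t)) (v' := fun t => v t + v (-t))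
      (a := -x) (b := x)
      (fun t _ => hFderiv t) (fun t _ => hGderiv t)
      ((hcg.neg).intervalIntegrable _ _)
      ((hcv.add (hcv.comp continuous_neg)).intervalIntegrable _ _)
    rw [hF_even x, hFx] at key
    rw [key]
    simp [neg_mul, intervalIntegral.integral_neg]
  -- core identity
  have hcore : (∫ t in (-x)..x, F t * v t) = ∫ t in (-x)..x, Kc t * G t := by
    linear_combination (hI3 + hI4 + hI2) / 2
  -- congruences on [-b,b]
  have huIcc : Set.uIcc (-x) x = Set.Icc (-b) b := uIcc_neg_self
  have hveq : ∀ t, |t| ≤ b → v t = u t := by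
    intro t ht; simp only [hvdef]; rw [clampR_eq (le_trans ht hb)]
  have hGeq : ∀ t, |t| ≤ a → G t = ∫ s in (-t)..t, u s := by
    intro t ht
    rw [hG_eq t]
    exact intervalIntegral.integral_congr fun s hs => by
      simp only [hvdef]; rw [clampR_eq (le_trans (mem_uIcc_abs hs) ht)]
  have hFeq : ∀ t, |t| ≤ b → F t = ∫ s in t..x, (K x s - K x (-s)) := by
    intro t ht
    simp only [hFdef]
    refine intervalIntegral.integral_congr fun s hs => ?_
    have hsb : |s| ≤ b := by
      have h1 := Set.mem_uIcc.mp hs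
      have hx1 : -b ≤ x := by rw [hbdef]; exact neg_abs_le x
      have hx2 : x ≤ b := by rw [hbdef]; exact le_abs_self x
      rw [abs_le] at ht ⊢
      rcases h1 with ⟨hs1, hs2⟩ | ⟨hs1, hs2⟩ <;> constructor <;> linarith
    simp only [hgdef, hKcdef]
    rw [clampR_eq hsb, clampR_neg hb0, clampR_eq hsb]
  have hKheq : ∀ h t, |t| ≤ b → Kh h x t = h / 2 + Kc t + h / 2 * F t := by
    intro h t ht
    rw [hKh, hFeq t ht]
    simp only [hKcdef]
    rw [clampR_eq ht]
  -- assemble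
  rw [hTh h₂ u x, hTh h₁ _ x]
  show u x + (∫ t in (-x)..x, Kh h₂ x t * u t)
      = (u x + (h₂ - h₁) / 2 * ∫ t in (-x)..x, u t)
        + ∫ t in (-x)..x, Kh h₁ x t * (u t + (h₂ - h₁) / 2 * ∫ s in (-t)..t, u s)
  have hLrw : (∫ t in (-x)..x, Kh h₂ x t * u t)
      = ∫ t in (-x)..x, (h₂ / 2 + Kc t + h₂ / 2 * F t) * v t := by
    refine intervalIntegral.integral_congr fun t ht => ?_
    rw [huIcc] at ht
    have ht' : |t| ≤ b := abs_le.mpr ⟨ht.1, ht.2⟩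
    rw [hKheq h₂ t ht', hveq t ht']
  have hRrw : (∫ t in (-x)..x, Kh h₁ x t * (u t + (h₂ - h₁) / 2 * ∫ s in (-t)..t, u s))
      = ∫ t in (-x)..x, (h₁ / 2 + Kc t + h₁ / 2 * F t) * (v t + (h₂ - h₁) / 2 * G t) := by
    refine intervalIntegral.integral_congr fun t ht => ?_
    rw [huIcc] at ht
    have ht' : |t| ≤ b := abs_le.mpr ⟨ht.1, ht.2⟩
    rw [hKheq h₁ t ht', hveq t ht', hGeq t (le_trans ht' hb)]
  rw [hLrw, hRrw, ← hveq x hbdef.ge, ← hGeq x (le_of_eq_of_le hbdef.symm hb)]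
  -- linear expansion
  have hintP : ∀ h : ℂ, Continuous (fun t => (h / 2 + Kc t + h / 2 * F t)) := fun h =>
    (continuous_const.add hcKc).add (continuous_const.mul hFcont)
  have hL : (∫ t in (-x)..x, (h₂ / 2 + Kc t + h₂ / 2 * F t) * v t)
      = (∫ t in (-x)..x, (h₁ / 2 + Kc t + h₁ / 2 * F t) * v t)
        + (h₂ - h₁) / 2 * (∫ t in (-x)..x, v t)
        + (h₂ - h₁) / 2 * ∫ t in (-x)..x, F t * v t := by
    have e1 : (∫ t in (-x)..x, (h₂ / 2 + Kc t + h₂ / 2 * F t) * v t)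
        = ∫ t in (-x)..x, ((h₁ / 2 + Kc t + h₁ / 2 * F t) * v t
            + ((h₂ - h₁) / 2 * v t + (h₂ - h₁) / 2 * (F t * v t))) := by
      refine intervalIntegral.integral_congr fun t _ => ?_
      ring
    rw [e1, intervalIntegral.integral_add (((hintP h₁).fun_mul hcv).intervalIntegrable _ _)
      (((continuous_const.fun_mul hcv).fun_add
        (continuous_const.fun_mul (hFcont.fun_mul hcv))).intervalIntegrable _ _),
      intervalIntegral.integral_add ((continuous_const.fun_mul hcv).intervalIntegrable _ _)
        ((continuous_const.fun_mul (hFcont.fun_mul hcv)).intervalIntegrable _ _),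
      intervalIntegral.integral_const_mul, intervalIntegral.integral_const_mul]
    ring
  have hR : (∫ t in (-x)..x, (h₁ / 2 + Kc t + h₁ / 2 * F t) * (v t + (h₂ - h₁) / 2 * G t))
      = (∫ t in (-x)..x, (h₁ / 2 + Kc t + h₁ / 2 * F t) * v t)
        + (h₂ - h₁) / 2 * (h₁ / 2) * (∫ t in (-x)..x, (1 + F t) * G t)
        + (h₂ - h₁) / 2 * ∫ t in (-x)..x, Kc t * G t := by
    have e1 : (∫ t in (-x)..x, (h₁ / 2 + Kc t + h₁ / 2 * F t) * (v t + (h₂ - h₁) / 2 * G t))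
        = ∫ t in (-x)..x, ((h₁ / 2 + Kc t + h₁ / 2 * F t) * v t
            + ((h₂ - h₁) / 2 * (h₁ / 2) * ((1 + F t) * G t)
              + (h₂ - h₁) / 2 * (Kc t * G t))) := by
      refine intervalIntegral.integral_congr fun t _ => ?_
      ring
    rw [e1, intervalIntegral.integral_add (((hintP h₁).fun_mul hcv).intervalIntegrable _ _)
      (((continuous_const.fun_mul ((continuous_const.fun_add hFcont).fun_mul hGcont)).fun_add
        (continuous_const.fun_mul (hcKc.fun_mul hGcont))).intervalIntegrable _ _),
      intervalIntegral.integral_add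
        ((continuous_const.fun_mul ((continuous_const.fun_add hFcont).fun_mul hGcont)).intervalIntegrable _ _)
        ((continuous_const.fun_mul (hcKc.fun_mul hGcont)).intervalIntegrable _ _),
      intervalIntegral.integral_const_mul, intervalIntegral.integral_const_mul]
    ring
  rw [hL, hR, hI1, hcore, ← hG_eq x]
  ring
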